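/- Let T > 0, let K : [0,T] → B(ℋ) be continuous with each K(s) self-adjoint, let G : [0,T] → B(ℋ) be continuous, and let F : [0,T] → B(ℋ) be differentiable with F'(s) = −i[K(s), F(s)] + G(s) for all s ∈ [0,T]. Then for every t ∈ [0,T]: ‖F(t)‖ ≤ ‖F(0)‖ + ∫₀ᵗ ‖G(s)‖ ds. -/

import Mathlib

set_option synthInstance.maxHeartbeats 400000
set_option maxHeartbeats 1000000


noncomputable section

open Complex

/-- The commutator `[A,B] = AB - BA` of two bounded operators. -/
def opComm {H : Type*} [NormedAddCommGroup H] [InnerProductSpace ℂ H] [CompleteSpace H]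
    (A B : H →L[ℂ] H) : H →L[ℂ] H := A * B - B * A

open NormedSpace in
private lemma conj_norm_aux {H : Type*} [NormedAddCommGroup H] [InnerProductSpace ℂ H]
    [CompleteSpace H] [Nontrivial H] (A B : H →L[ℂ] H) (hA : IsSelfAdjoint A) (t : ℝ) :
    ‖NormedSpace.exp (t • ((-I) • A)) * B * NormedSpace.exp (t • (I • A))‖ = ‖B‖ := by
  have hstar : star (NormedSpace.exp (t • (I • A))) = NormedSpace.exp (t • ((-I) • A)) := by
    rw [star_exp]
    congr 1
    rw [star_smul, star_trivial, star_smul, hA.star_eq, star_def, conj_I]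
  have hcomm : Commute (t • (I • A)) (t • ((-I) • A)) :=
    ((((Commute.refl A).smul_left I).smul_right (-I)).smul_left t).smul_right t
  have hsum : t • (I • A) + t • ((-I) • A) = 0 := by
    have h : I • A + (-I) • A = 0 := by rw [← add_smul]; simp
    rw [← smul_add, h, smul_zero]
  have hmem : NormedSpace.exp (t • (I • A)) ∈ unitary (H →L[ℂ] H) := by
    rw [Unitary.mem_iff, hstar]
    constructor
    · rw [← exp_add_of_commute_of_mem_ball (𝕂 := ℝ) hcomm.symm ((expSeries_radius_eq_top ℝ (H →L[ℂ] H)).symm ▸ edist_lt_top _ _) ((expSeries_radius_eq_top ℝ (H →L[ℂ] H)).symm ▸ edist_lt_top _ _), add_comm, hsum, NormedSpace.exp_zero]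
    · rw [← exp_add_of_commute_of_mem_ball (𝕂 := ℝ) hcomm ((expSeries_radius_eq_top ℝ (H →L[ℂ] H)).symm ▸ edist_lt_top _ _) ((expSeries_radius_eq_top ℝ (H →L[ℂ] H)).symm ▸ edist_lt_top _ _), hsum, NormedSpace.exp_zero]
  rw [← hstar, CStarRing.norm_mul_mem_unitary _ hmem,
    CStarRing.norm_mem_unitary_mul B (Unitary.star_mem hmem)]


/-- The variation of the Duhamel principle used in the paper: if
`F'(s) = -i[K(s), F(s)] + G(s)` on `[0,T]` with `K(s)` self-adjoint, then
`‖F(t)‖ ≤ ‖F(0)‖ + ∫₀ᵗ ‖G(s)‖ ds`. -/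
theorem statement_7 {H : Type*} [NormedAddCommGroup H] [InnerProductSpace ℂ H] [CompleteSpace H]
    (T : ℝ) (hT : 0 < T) (K G F : ℝ → (H →L[ℂ] H))
    (hKcont : ContinuousOn K (Set.Icc 0 T))
    (hKsa : ∀ s ∈ Set.Icc (0:ℝ) T, IsSelfAdjoint (K s))
    (hGcont : ContinuousOn G (Set.Icc 0 T))
    (hF : ∀ s ∈ Set.Icc (0:ℝ) T,
      HasDerivWithinAt F ((-I) • opComm (K s) (F s) + G s) (Set.Icc 0 T) s) :
    ∀ t ∈ Set.Icc (0:ℝ) T, ‖F t‖ ≤ ‖F 0‖ + ∫ s in (0:ℝ)..t, ‖G s‖ := by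
  rcases subsingleton_or_nontrivial H with hH | hH
  · intro t ht
    have h0 : F t = F 0 := Subsingleton.elim _ _
    have hnn : (0:ℝ) ≤ ∫ s in (0:ℝ)..t, ‖G s‖ :=
      intervalIntegral.integral_nonneg ht.1 fun s _ => norm_nonneg _
    rw [h0]; linarith
  intro t ht
  have hFcont : ContinuousOn F (Set.Icc 0 T) := fun s hs => (hF s hs).continuousWithinAt
  have hgcont : ContinuousOn (fun s => ‖G s‖) (Set.Icc 0 T) := hGcont.norm
  refine image_le_of_liminf_slope_right_le_deriv_boundary
    (f := fun x => ‖F x‖) (B := fun x => ‖F 0‖ + ∫ s in (0:ℝ)..x, ‖G s‖) (B' := fun x => ‖G x‖)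
    ?_ ?_ ?_ ?_ ?_ ht
  · exact continuous_norm.comp_continuousOn hFcont
  · simp
  · apply continuousOn_const.add
    have hi : MeasureTheory.IntegrableOn (fun s => ‖G s‖) (Set.uIcc 0 T) := by
      rw [Set.uIcc_of_le hT.le]
      exact hgcont.integrableOn_Icc
    have := intervalIntegral.continuousOn_primitive_interval hi
    rwa [Set.uIcc_of_le hT.le] at this
  · -- derivative of the boundary function
    intro x hx
    have hxT : x < T := hx.2
    have hmem : Set.Ioc x T ∈ nhdsWithin x (Set.Ioi x) := by
      rw [← Set.Ioi_inter_Iic]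
      exact Filter.inter_mem self_mem_nhdsWithin
        (nhdsWithin_le_nhds (Iic_mem_nhds hxT))
    have hmeas : StronglyMeasurableAtFilter (fun s => ‖G s‖) (nhdsWithin x (Set.Ioi x))
        MeasureTheory.volume :=
      ⟨Set.Ioc x T, hmem,
        ((hgcont.mono (fun z hz => ⟨hx.1.trans hz.1.le, hz.2⟩)).aestronglyMeasurable
          measurableSet_Ioc)⟩
    have hcw : ContinuousWithinAt (fun s => ‖G s‖) (Set.Ioi x) x := by
      have h2 := (hgcont x ⟨hx.1, hx.2.le⟩).mono
        (fun z (hz : z ∈ Set.Ioc x T) => ⟨hx.1.trans hz.1.le, hz.2⟩)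
      rwa [ContinuousWithinAt, nhdsWithin_Ioc_eq_nhdsGT hxT] at h2
    have hint : IntervalIntegrable (fun s => ‖G s‖) MeasureTheory.volume 0 x := by
      apply ContinuousOn.intervalIntegrable
      apply hgcont.mono
      rw [Set.uIcc_of_le hx.1]
      exact Set.Icc_subset_Icc le_rfl hx.2.le
    exact (intervalIntegral.integral_hasDerivWithinAt_right hint hmeas hcw).const_add _
  · -- the liminf slope bound
    intro x hx r hr
    have hx0 : (0:ℝ) ≤ x := hx.1
    have hxT : x < T := hx.2
    have hxI : x ∈ Set.Icc (0:ℝ) T := ⟨hx0, hxT.le⟩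
    set A := K x with hA
    have hAsa : IsSelfAdjoint A := hKsa x hxI
    set φ : ℝ → H →L[ℂ] H := fun z =>
      NormedSpace.exp ((z - x) • ((-I) • A)) * F x * NormedSpace.exp ((z - x) • (I • A))
        + (z - x) • G x with hφdef
    have hφx : φ x = F x := by
      simp [hφdef, NormedSpace.exp_zero]
    have hφnorm : ∀ z, ‖φ z‖ ≤ ‖F x‖ + |z - x| * ‖G x‖ := by
      intro z
      calc ‖φ z‖ ≤ ‖NormedSpace.exp ((z - x) • ((-I) • A)) * F x *
            NormedSpace.exp ((z - x) • (I • A))‖ + ‖(z - x) • G x‖ := norm_add_le _ _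
        _ = ‖F x‖ + |z - x| * ‖G x‖ := by
            rw [conj_norm_aux A (F x) hAsa, norm_smul, Real.norm_eq_abs]
    have hφderiv : HasDerivAt φ ((-I) • opComm (K x) (F x) + G x) x := by
      have d1 : HasDerivAt (fun z : ℝ => NormedSpace.exp ((z - x) • ((-I) • A)))
          ((-I) • A) x := by
        have h0 := hasDerivAt_exp_smul_const ((-I) • A) (0 : ℝ)
        have h1 := h0.scomp_of_eq x ((hasDerivAt_id x).sub_const x) (by simp)
        simpa [Function.comp_def] using h1
      have d2 : HasDerivAt (fun z : ℝ => NormedSpace.exp ((z - x) • (I • A)))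
          (I • A) x := by
        have h0 := hasDerivAt_exp_smul_const (I • A) (0 : ℝ)
        have h1 := h0.scomp_of_eq x ((hasDerivAt_id x).sub_const x) (by simp)
        simpa [Function.comp_def] using h1
      have d5 : HasDerivAt (fun z : ℝ => (z - x) • G x) (G x) x := by
        simpa using ((hasDerivAt_id x).sub_const x).smul_const (G x)
      have d4 := ((d1.mul_const (F x)).mul d2).add d5
      simp only [sub_self, zero_smul, NormedSpace.exp_zero, mul_one, one_mul] at d4
      refine d4.congr_deriv (Eq.symm ?_)
      rw [hA, opComm]
      simp only [smul_sub, smul_mul_assoc, mul_smul_comm, neg_smul, sub_eq_add_neg, neg_neg,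
        neg_mul, smul_add, smul_neg]
    have hψ : HasDerivWithinAt (fun z => F z - φ z) 0 (Set.Icc 0 T) x := by
      exact ((hF x hxI).sub hφderiv.hasDerivWithinAt).congr_deriv (by simp)
    set c : ℝ := (r - ‖G x‖) / 2 with hc
    have hcpos : 0 < c := by
      rw [hc]; linarith
    have hev0 : ∀ᶠ z in nhdsWithin x (Set.Icc 0 T), ‖F z - φ z‖ ≤ c * ‖z - x‖ := by
      have h1 : (fun z => F z - φ z) =o[nhdsWithin x (Set.Icc 0 T)] fun z => z - x := by
        have h2 := hψ.isLittleO
        simpa [hφx] using h2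
      exact h1.def hcpos
    have hsub : Set.Ioc x T ⊆ Set.Icc 0 T := fun z hz => ⟨hx0.trans hz.1.le, hz.2⟩
    have hev1 : ∀ᶠ z in nhdsWithin x (Set.Ioi x), ‖F z - φ z‖ ≤ c * ‖z - x‖ := by
      rw [← nhdsWithin_Ioc_eq_nhdsGT hxT]
      exact hev0.filter_mono (nhdsWithin_mono x hsub)
    have hev2 : ∀ᶠ z in nhdsWithin x (Set.Ioi x),
        slope (fun y => ‖F y‖) x z < r := by
      filter_upwards [hev1, self_mem_nhdsWithin] with z h1 h2
      have hzx : (0:ℝ) < z - x := sub_pos.2 h2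
      rw [slope_def_field, div_lt_iff₀ hzx]
      have hFz : ‖F z‖ ≤ ‖φ z‖ + ‖F z - φ z‖ := by
        calc ‖F z‖ = ‖φ z + (F z - φ z)‖ := by rw [add_sub_cancel]
          _ ≤ _ := norm_add_le _ _
      have h3 := hφnorm z
      have h4 : ‖z - x‖ = z - x := by rw [Real.norm_eq_abs, abs_of_pos hzx]
      have h5 : |z - x| = z - x := abs_of_pos hzx
      rw [h4] at h1
      rw [h5] at h3
      have h6 : ‖G x‖ + c < r := by rw [hc]; linarith
      nlinarith [norm_nonneg (F x)]
    exact hev2.frequently
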